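/- arXiv:1912.07804 — 2 statements merged into one kernel-verified Lean document; each statement's English description precedes it below -/
import Mathlib

section
/- Let S be a set, Acc ⊆ S, δ : S × 2^{X∪Y} → S, and α an environment constraint over X. Then Sys_st = S ∖ Env_st, i.e., the nested greatest/least fixpoint Sys_st is exactly the complement in S of the nested least/greatest fixpoint Env_st. -/
namespace LTLfSynth

/-! ### Syntax of LTL / LTLf formulas -/

/-- Syntax of LTL / LTLf formulas over atomic propositions `P`
(with the standard abbreviation `true` included as a constant). -/
inductive Formula (P : Type) : Type
  | tt : Formula P
  | atom : P → Formula P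
  | not : Formula P → Formula P
  | and : Formula P → Formula P → Formula P
  | next : Formula P → Formula P
  | until_ : Formula P → Formula P → Formula P

namespace Formula

/-- LTLf satisfaction at position `i` of a finite trace `ρ` (a list of subsets of `P`). -/
def finSatAt {P : Type} (ρ : List (Set P)) : Formula P → ℕ → Prop
  | tt, _ => True
  | atom a, i => a ∈ ρ.getD i ∅
  | not φ, i => ¬ finSatAt ρ φ i
  | and φ ψ, i => finSatAt ρ φ i ∧ finSatAt ρ ψ i
  | next φ, i => i + 1 < ρ.length ∧ finSatAt ρ φ (i + 1)
  | until_ φ ψ, i => ∃ j, i ≤ j ∧ j < ρ.length ∧ finSatAt ρ ψ j ∧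
      ∀ k, i ≤ k → k < j → finSatAt ρ φ k

/-- `ρ ⊨ φ` for a finite trace. -/
def finSat {P : Type} (ρ : List (Set P)) (φ : Formula P) : Prop := finSatAt ρ φ 0

/-- LTL satisfaction at position `i` of an infinite trace `ρ : ℕ → Set P`. -/
def infSatAt {P : Type} (ρ : ℕ → Set P) : Formula P → ℕ → Prop
  | tt, _ => True
  | atom a, i => a ∈ ρ i
  | not φ, i => ¬ infSatAt ρ φ i
  | and φ ψ, i => infSatAt ρ φ i ∧ infSatAt ρ ψ i
  | next φ, i => infSatAt ρ φ (i + 1)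
  | until_ φ ψ, i => ∃ j, i ≤ j ∧ infSatAt ρ ψ j ∧
      ∀ k, i ≤ k → k < j → infSatAt ρ φ k

/-- `ρ ⊨ φ` for an infinite trace. -/
def infSat {P : Type} (ρ : ℕ → Set P) (φ : Formula P) : Prop := infSatAt ρ φ 0

/-- `F φ = true U φ`. -/
def F {P : Type} (φ : Formula P) : Formula P := until_ tt φ

/-- `G φ = ¬ F ¬ φ`. -/
def G {P : Type} (φ : Formula P) : Formula P := not (F (not φ))

/-- `φ ∨ ψ`. -/
def or {P : Type} (φ ψ : Formula P) : Formula P := not (and (not φ) (not ψ))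

/-- `φ → ψ`. -/
def imp {P : Type} (φ ψ : Formula P) : Formula P := or (not φ) ψ

/-- Atom renaming. -/
def map {P Q : Type} (f : P → Q) : Formula P → Formula Q
  | tt => tt
  | atom a => atom (f a)
  | not φ => not (map f φ)
  | and φ ψ => and (map f φ) (map f ψ)
  | next φ => next (map f φ)
  | until_ φ ψ => until_ (map f φ) (map f ψ)

end Formula

/-! ### The LTLf-to-LTL translation with the fresh atom `alive` (modeled as `none`) -/

/-- The fresh atom `alive` over `P ∪ {alive}`, modeled as `Option P` with `alive = none`. -/
def alive {P : Type} : Formula (Option P) := Formula.atom none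

/-- The translation `t` from LTLf over `P` to LTL over `P ∪ {alive}`. -/
def t {P : Type} : Formula P → Formula (Option P)
  | .tt => .tt
  | .atom a => .atom (some a)
  | .not φ => .not (t φ)
  | .and φ ψ => .and (t φ) (t ψ)
  | .next φ => .next (.and alive (t φ))
  | .until_ φ ψ => .until_ (t φ) (.and alive (t ψ))

/-- `ψ = t(φ) ∧ alive ∧ (alive U G ¬alive)`. -/
def transLTL {P : Type} (φ : Formula P) : Formula (Option P) :=
  .and (t φ) (.and alive (.until_ alive (Formula.G (.not alive))))

/-- Extension equivalence `τ ≈ τ'`: `τ'(i) = τ[i] ∪ {alive}` for `i < |τ|` and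
`τ'(i) = ∅` for `i ≥ |τ|`. -/
def extEquiv {P : Type} (τ : List (Set P)) (τ' : ℕ → Set (Option P)) : Prop :=
  (∀ i, i < τ.length → τ' i = insert none (Option.some '' τ.getD i ∅)) ∧
  (∀ i, τ.length ≤ i → τ' i = ∅)

/-! ### Boolean formulas (environment constraints) -/

/-- Boolean (propositional) formulas over variables `V`. -/
inductive BForm (V : Type) : Type
  | tt : BForm V
  | atom : V → BForm V
  | not : BForm V → BForm V
  | and : BForm V → BForm V → BForm V

namespace BForm

/-- `X ⊨ α` for an assignment `X ⊆ V`. -/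
def eval {V : Type} (X : Set V) : BForm V → Prop
  | tt => True
  | atom v => v ∈ X
  | not b => ¬ eval X b
  | and b c => eval X b ∧ eval X c

/-- View a Boolean formula as a temporal formula, relocating the atoms by `emb`. -/
def toFormula {V P : Type} (emb : V → P) : BForm V → Formula P
  | tt => .tt
  | atom v => .atom (emb v)
  | not b => .not (toFormula emb b)
  | and b c => .and (toFormula emb b) (toFormula emb c)

end BForm

/-! ### Traces, strategies and plays over a DFA arena -/

/-- Combine an environment assignment `X ⊆ Vx` with an agent assignment `Y ⊆ Vy` into
an assignment over `X ∪ Y` (modeled as `Vx ⊕ Vy`). -/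
def combine {Vx Vy : Type} (X : Set Vx) (Y : Set Vy) : Set (Vx ⊕ Vy) :=
  {v | Sum.elim (· ∈ X) (· ∈ Y) v}

/-- The history `[a₀, …, a_{j-1}]` of a sequence. -/
def histList {A : Type} (lam : ℕ → A) (j : ℕ) : List A :=
  (List.range j).map lam

/-- A sequence of environment assignments is `α`-fair if `α` holds infinitely often. -/
def fairSeq {Vx : Type} (α : BForm Vx) (lam : ℕ → Set Vx) : Prop :=
  ∀ n, ∃ j, n ≤ j ∧ α.eval (lam j)

/-- A sequence of environment assignments is `α`-stable if `α` holds at all but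
finitely many positions. -/
def stableSeq {Vx : Type} (α : BForm Vx) (lam : ℕ → Set Vx) : Prop :=
  ∃ n, ∀ j, n ≤ j → α.eval (lam j)

/-- The state visited at round `j` of the play from `s` induced by environment sequence
`lam` and agent strategy `g`. -/
def playState {Vx Vy S : Type} (δ : S → Set (Vx ⊕ Vy) → S) (g : List (Set Vx) → Set Vy)
    (s : S) (lam : ℕ → Set Vx) : ℕ → S
  | 0 => s
  | j + 1 => δ (playState δ g s lam j) (combine (lam j) (g (histList lam (j + 1))))

/-- The state visited at round `j` of the play from `s` in which the environment follows
strategy `h` (so `X_j = h (Y₀, …, Y_{j-1})`) and the agent plays the sequence `mu`. -/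
def envPlayState {Vx Vy S : Type} (δ : S → Set (Vx ⊕ Vy) → S) (h : List (Set Vy) → Set Vx)
    (s : S) (mu : ℕ → Set Vy) : ℕ → S
  | 0 => s
  | j + 1 => δ (envPlayState δ h s mu j) (combine (h (histList mu j)) (mu j))

/-- `s` is an agent winning state of the fair DFA game `⟨G, α⟩`. -/
def agentWinsFairFrom {Vx Vy S : Type} (δ : S → Set (Vx ⊕ Vy) → S) (Acc : Set S)
    (α : BForm Vx) (s : S) : Prop :=
  ∃ g : List (Set Vx) → Set Vy, ∀ lam : ℕ → Set Vx,
    ¬ fairSeq α lam ∨ ∃ j, playState δ g s lam j ∈ Acc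

/-- `s` is an agent winning state of the stable DFA game `⟨G, α⟩`. -/
def agentWinsStableFrom {Vx Vy S : Type} (δ : S → Set (Vx ⊕ Vy) → S) (Acc : Set S)
    (α : BForm Vx) (s : S) : Prop :=
  ∃ g : List (Set Vx) → Set Vy, ∀ lam : ℕ → Set Vx,
    ¬ stableSeq α lam ∨ ∃ j, playState δ g s lam j ∈ Acc

/-- `s` is an environment winning state of the fair DFA game `⟨G, α⟩`. -/
def envWinsFairFrom {Vx Vy S : Type} (δ : S → Set (Vx ⊕ Vy) → S) (Acc : Set S)
    (α : BForm Vx) (s : S) : Prop :=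
  ∃ h : List (Set Vy) → Set Vx, ∀ mu : ℕ → Set Vy,
    fairSeq α (fun j => h (histList mu j)) ∧ ∀ j, envPlayState δ h s mu j ∉ Acc

/-- `s` is an environment winning state of the stable DFA game `⟨G, α⟩`. -/
def envWinsStableFrom {Vx Vy S : Type} (δ : S → Set (Vx ⊕ Vy) → S) (Acc : Set S)
    (α : BForm Vx) (s : S) : Prop :=
  ∃ h : List (Set Vy) → Set Vx, ∀ mu : ℕ → Set Vy,
    stableSeq α (fun j => h (histList mu j)) ∧ ∀ j, envPlayState δ h s mu j ∉ Acc

/-! ### The fixpoint computations -/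

section Fixpoints

variable {Vx Vy S : Type} (δ : S → Set (Vx ⊕ Vy) → S) (Acc : Set S) (α : BForm Vx)

/-- `{s | ∃X ∀Y, (X ⊨ α ∧ δ(s, X∪Y) ∈ A ∖ Acc) ∨ δ(s, X∪Y) ∈ B ∖ Acc}`. -/
def envStep (A B : Set S) : Set S :=
  {s | ∃ X : Set Vx, ∀ Y : Set Vy,
    (α.eval X ∧ δ s (combine X Y) ∈ A \ Acc) ∨ δ s (combine X Y) ∈ B \ Acc}

/-- `{s | ∀X ∃Y, (X ⊭ α ∨ δ(s, X∪Y) ∈ A ∪ Acc) ∧ δ(s, X∪Y) ∈ B ∪ Acc}`. -/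
def sysStep (A B : Set S) : Set S :=
  {s | ∀ X : Set Vx, ∃ Y : Set Vy,
    (¬ α.eval X ∨ δ s (combine X Y) ∈ A ∪ Acc) ∧ δ s (combine X Y) ∈ B ∪ Acc}

lemma envStep_mono {A₁ A₂ B₁ B₂ : Set S} (hA : A₁ ⊆ A₂) (hB : B₁ ⊆ B₂) :
    envStep δ Acc α A₁ B₁ ⊆ envStep δ Acc α A₂ B₂ := by
  rintro s ⟨X, hX⟩
  refine ⟨X, fun Y => ?_⟩
  rcases hX Y with ⟨h1, h2, h3⟩ | ⟨h2, h3⟩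
  · exact Or.inl ⟨h1, hA h2, h3⟩
  · exact Or.inr ⟨hB h2, h3⟩

lemma sysStep_mono {A₁ A₂ B₁ B₂ : Set S} (hA : A₁ ⊆ A₂) (hB : B₁ ⊆ B₂) :
    sysStep δ Acc α A₁ B₁ ⊆ sysStep δ Acc α A₂ B₂ := by
  intro s hs X
  obtain ⟨Y, h1, h2⟩ := hs X
  refine ⟨Y, ?_, ?_⟩
  · rcases h1 with h | h | h
    · exact Or.inl h
    · exact Or.inr (Or.inl (hA h))
    · exact Or.inr (Or.inr h)
  · rcases h2 with h | h
    · exact Or.inl (hB h)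
    · exact Or.inr h

/-- Inner fixpoint operator `Ẑ ↦ envStep Z Ẑ` (for `Env_f`). -/
def envFairInner (Z : Set S) : Set S →o Set S :=
  ⟨fun Zh => envStep δ Acc α Z Zh, fun _ _ h => envStep_mono δ Acc α subset_rfl h⟩

/-- Outer operator `Z ↦ μẐ. envStep Z Ẑ` (for `Env_f`). -/
def envFairOuter : Set S →o Set S :=
  ⟨fun Z => OrderHom.lfp (envFairInner δ Acc α Z),
   fun _ _ h => OrderHom.lfp.monotone fun _ => envStep_mono δ Acc α h subset_rfl⟩

/-- `Env_f = νZ. μẐ. {s | ∃X ∀Y, (X ⊨ α ∧ δ(s,X∪Y) ∈ Z∖Acc) ∨ δ(s,X∪Y) ∈ Ẑ∖Acc}`. -/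
def EnvFair : Set S := OrderHom.gfp (envFairOuter δ Acc α)

/-- Inner fixpoint operator `Ẑ ↦ sysStep Z Ẑ` (for `Sys_f`). -/
def sysFairInner (Z : Set S) : Set S →o Set S :=
  ⟨fun Zh => sysStep δ Acc α Z Zh, fun _ _ h => sysStep_mono δ Acc α subset_rfl h⟩

/-- Outer operator `Z ↦ νẐ. sysStep Z Ẑ` (for `Sys_f`). -/
def sysFairOuter : Set S →o Set S :=
  ⟨fun Z => OrderHom.gfp (sysFairInner δ Acc α Z),
   fun _ _ h => OrderHom.gfp.monotone fun _ => sysStep_mono δ Acc α h subset_rfl⟩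

/-- `Sys_f = μZ. νẐ. {s | ∀X ∃Y, (X ⊭ α ∨ δ(s,X∪Y) ∈ Z∪Acc) ∧ δ(s,X∪Y) ∈ Ẑ∪Acc}`. -/
def SysFair : Set S := OrderHom.lfp (sysFairOuter δ Acc α)

/-- Inner fixpoint operator `Ẑ ↦ envStep Ẑ Z` (for `Env_st`). -/
def envStInner (Z : Set S) : Set S →o Set S :=
  ⟨fun Zh => envStep δ Acc α Zh Z, fun _ _ h => envStep_mono δ Acc α h subset_rfl⟩

/-- Outer operator `Z ↦ νẐ. envStep Ẑ Z` (for `Env_st`). -/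
def envStOuter : Set S →o Set S :=
  ⟨fun Z => OrderHom.gfp (envStInner δ Acc α Z),
   fun _ _ h => OrderHom.gfp.monotone fun _ => envStep_mono δ Acc α subset_rfl h⟩

/-- `Env_st = μZ. νẐ. {s | ∃X ∀Y, (X ⊨ α ∧ δ(s,X∪Y) ∈ Ẑ∖Acc) ∨ δ(s,X∪Y) ∈ Z∖Acc}`. -/
def EnvSt : Set S := OrderHom.lfp (envStOuter δ Acc α)

/-- Inner fixpoint operator `Ẑ ↦ sysStep Ẑ Z` (for `Sys_st`). -/
def sysStInner (Z : Set S) : Set S →o Set S :=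
  ⟨fun Zh => sysStep δ Acc α Zh Z, fun _ _ h => sysStep_mono δ Acc α h subset_rfl⟩

/-- Outer operator `Z ↦ μẐ. sysStep Ẑ Z` (for `Sys_st`). -/
def sysStOuter : Set S →o Set S :=
  ⟨fun Z => OrderHom.lfp (sysStInner δ Acc α Z),
   fun _ _ h => OrderHom.lfp.monotone fun _ => sysStep_mono δ Acc α subset_rfl h⟩

/-- `Sys_st = νZ. μẐ. {s | ∀X ∃Y, (X ⊭ α ∨ δ(s,X∪Y) ∈ Ẑ∪Acc) ∧ δ(s,X∪Y) ∈ Z∪Acc}`. -/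
def SysSt : Set S := OrderHom.gfp (sysStOuter δ Acc α)

end Fixpoints

/-! ### Strategy extraction -/

/-- Approximates `Z₀ = ∅`,
`Z_{i+1} = {s | ∀X ∃Y, (X ⊭ α ∨ δ(s,X∪Y) ∈ Z_i ∪ Acc) ∧ δ(s,X∪Y) ∈ Sys_f ∪ Acc}`. -/
def fairApprox {Vx Vy S : Type} (δ : S → Set (Vx ⊕ Vy) → S) (Acc : Set S) (α : BForm Vx) :
    ℕ → Set S
  | 0 => ∅
  | i + 1 => sysStep δ Acc α (fairApprox δ Acc α i) (SysFair δ Acc α)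

/-- One step of the arena under output function `ω`: `δ(s, X ∪ ω(s, X))`. -/
def stepWith {Vx Vy S : Type} (δ : S → Set (Vx ⊕ Vy) → S) (ω : S → Set Vx → Set Vy)
    (s : S) (X : Set Vx) : S :=
  δ s (combine X (ω s X))

/-- The strategy generated by an output function `ω` from `s₀`:
`g(X₀,…,X_j) = ω(t_j, X_j)` where `t₀ = s₀` and `t_{k+1} = δ(t_k, X_k ∪ ω(t_k, X_k))`. -/
def genStrategy {Vx Vy S : Type} (δ : S → Set (Vx ⊕ Vy) → S) (ω : S → Set Vx → Set Vy)
    (s₀ : S) (l : List (Set Vx)) : Set Vy :=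
  ω (l.dropLast.foldl (stepWith δ ω) s₀) (l.getLast?.getD ∅)

/-- Admissibility of an output function for the fair game: for every `i`, every
non-accepting `s ∈ Z_{i+1} ∖ Z_i` and every `X`, the value `Y = ω(s, X)` satisfies
`(X ⊭ α ∨ δ(s,X∪Y) ∈ Z_i ∪ Acc) ∧ δ(s,X∪Y) ∈ Sys_f ∪ Acc`. -/
def AdmissibleFair {Vx Vy S : Type} (δ : S → Set (Vx ⊕ Vy) → S) (Acc : Set S)
    (α : BForm Vx) (ω : S → Set Vx → Set Vy) : Prop :=
  ∀ i : ℕ, ∀ s ∈ fairApprox δ Acc α (i + 1), s ∉ fairApprox δ Acc α i → s ∉ Acc →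
    ∀ X : Set Vx,
      (¬ α.eval X ∨ stepWith δ ω s X ∈ fairApprox δ Acc α i ∪ Acc) ∧
        stepWith δ ω s X ∈ SysFair δ Acc α ∪ Acc

/-- `W = νZ. {s | ∀X ∃Y, (X ⊭ α ∨ δ(s,X∪Y) ∈ Sys_st ∪ Acc) ∧ δ(s,X∪Y) ∈ Z ∪ Acc}`. -/
def Wst {Vx Vy S : Type} (δ : S → Set (Vx ⊕ Vy) → S) (Acc : Set S) (α : BForm Vx) : Set S :=
  OrderHom.gfp (sysFairInner δ Acc α (SysSt δ Acc α))

/-- Admissibility of an output function for the stable game: for every non-accepting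
`s ∈ W` and every `X`, the value `Y = ω(s, X)` satisfies
`(X ⊭ α ∨ δ(s,X∪Y) ∈ Sys_st ∪ Acc) ∧ δ(s,X∪Y) ∈ W ∪ Acc`. -/
def AdmissibleStable {Vx Vy S : Type} (δ : S → Set (Vx ⊕ Vy) → S) (Acc : Set S)
    (α : BForm Vx) (ω : S → Set Vx → Set Vy) : Prop :=
  ∀ s ∈ Wst δ Acc α, s ∉ Acc → ∀ X : Set Vx,
    (¬ α.eval X ∨ stepWith δ ω s X ∈ SysSt δ Acc α ∪ Acc) ∧
      stepWith δ ω s X ∈ Wst δ Acc α ∪ Acc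

/-! ### Realizability notions -/

/-- The infinite combined trace induced by environment sequence `lam` and agent
strategy `g`: position `i` carries `X_i ∪ g(X₀,…,X_i)`. -/
def inducedTrace {Vx Vy : Type} (g : List (Set Vx) → Set Vy) (lam : ℕ → Set Vx)
    (i : ℕ) : Set (Vx ⊕ Vy) :=
  combine (lam i) (g (histList lam (i + 1)))

/-- The finite trace `ρ^k = (X₀ ∪ g(X₀)), …, (X_k ∪ g(X₀,…,X_k))`. -/
def finPrefix {Vx Vy : Type} (g : List (Set Vx) → Set Vy) (lam : ℕ → Set Vx)
    (k : ℕ) : List (Set (Vx ⊕ Vy)) :=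
  (List.range (k + 1)).map (inducedTrace g lam)

/-- `φ` is `α`-fair realizable. -/
def fairRealizable {Vx Vy : Type} (α : BForm Vx) (φ : Formula (Vx ⊕ Vy)) : Prop :=
  ∃ g : List (Set Vx) → Set Vy, ∀ lam : ℕ → Set Vx,
    fairSeq α lam → ∃ k, Formula.finSat (finPrefix g lam k) φ

/-- `φ` is `α`-stable realizable. -/
def stableRealizable {Vx Vy : Type} (α : BForm Vx) (φ : Formula (Vx ⊕ Vy)) : Prop :=
  ∃ g : List (Set Vx) → Set Vy, ∀ lam : ℕ → Set Vx,
    stableSeq α lam → ∃ k, Formula.finSat (finPrefix g lam k) φ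

/-- `φ` is realizable under the LTL environment assumption `ψA`. -/
def realizableUnder {Vx Vy : Type} (ψA φ : Formula (Vx ⊕ Vy)) : Prop :=
  ∃ g : List (Set Vx) → Set Vy, ∀ lam : ℕ → Set Vx,
    Formula.infSat (inducedTrace g lam) ψA → ∃ k, Formula.finSat (finPrefix g lam k) φ

/-- Combine `X ⊆ Vx` with an agent assignment over `Y ∪ {alive}` (modeled as
`Option Vy`, with `alive = none`) into an assignment over `X ∪ Y ∪ {alive}`. -/
def combineA {Vx Vy : Type} (X : Set Vx) (Y' : Set (Option Vy)) :
    Set (Option (Vx ⊕ Vy)) :=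
  {v | match v with
       | none => none ∈ Y'
       | some (Sum.inl x) => x ∈ X
       | some (Sum.inr y) => some y ∈ Y'}

/-- LTL realizability of `ψ` over `X ∪ Y ∪ {alive}` w.r.t. `⟨X, Y ∪ {alive}⟩`,
where `alive` is controlled by the agent. -/
def ltlRealizable {Vx Vy : Type} (ψ : Formula (Option (Vx ⊕ Vy))) : Prop :=
  ∃ f : List (Set Vx) → Set (Option Vy), ∀ lam : ℕ → Set Vx,
    Formula.infSat (fun i => combineA (lam i) (f (histList lam (i + 1)))) ψ

end LTLfSynth
open LTLfSynth

section Duality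

variable {S : Type}

/-- Conjugate of a monotone map by complement. -/
def complConj (f : Set S →o Set S) : Set S →o Set S :=
  ⟨fun A => (f Aᶜ)ᶜ, fun A B h => compl_le_compl (f.mono (compl_le_compl h))⟩

lemma gfp_complConj (f : Set S →o Set S) :
    OrderHom.gfp (complConj f) = (OrderHom.lfp f)ᶜ := by
  apply le_antisymm
  · have hfix : f (OrderHom.gfp (complConj f))ᶜ = (OrderHom.gfp (complConj f))ᶜ := by
      have h := OrderHom.map_gfp (complConj f)
      change (f _ᶜ)ᶜ = _ at h
      conv_rhs => rw [← h]
      rw [compl_compl]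
    have h1 : OrderHom.lfp f ≤ (OrderHom.gfp (complConj f))ᶜ :=
      OrderHom.lfp_le f (le_of_eq hfix)
    exact le_compl_comm.mpr h1
  · apply OrderHom.le_gfp
    show (OrderHom.lfp f)ᶜ ≤ (f (OrderHom.lfp f)ᶜᶜ)ᶜ
    rw [compl_compl, OrderHom.map_lfp f]

lemma lfp_complConj (f : Set S →o Set S) :
    OrderHom.lfp (complConj f) = (OrderHom.gfp f)ᶜ := by
  have h : complConj (complConj f) = f := by
    apply OrderHom.ext; funext A; show (f Aᶜᶜ)ᶜᶜ = f A; simp [complConj]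
  have h2 := gfp_complConj (complConj f)
  rw [h] at h2
  rw [h2, compl_compl]

end Duality

lemma sysStep_compl {Vx Vy S : Type} (δ : S → Set (Vx ⊕ Vy) → S) (Acc : Set S)
    (α : BForm Vx) (A B : Set S) :
    sysStep δ Acc α A B = (envStep δ Acc α Aᶜ Bᶜ)ᶜ := by
  ext s
  simp only [sysStep, envStep, Set.mem_setOf_eq, Set.mem_compl_iff, Set.mem_diff,
    Set.mem_union]
  push_neg
  constructor
  · intro h X
    obtain ⟨Y, h1, h2⟩ := h X
    exact ⟨Y, by tauto⟩
  · intro h X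
    obtain ⟨Y, h1, h2⟩ := h X
    exact ⟨Y, by tauto, by tauto⟩

lemma sysStOuter_eq {Vx Vy S : Type} (δ : S → Set (Vx ⊕ Vy) → S) (Acc : Set S)
    (α : BForm Vx) : sysStOuter δ Acc α = complConj (envStOuter δ Acc α) := by
  apply OrderHom.ext; funext Z
  show OrderHom.lfp (sysStInner δ Acc α Z) = (OrderHom.gfp (envStInner δ Acc α Zᶜ))ᶜ
  rw [← lfp_complConj]
  congr 1
  apply OrderHom.ext; funext A
  show sysStep δ Acc α A Z = (envStep δ Acc α Aᶜ Zᶜ)ᶜ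
  exact sysStep_compl δ Acc α A Z

open LTLfSynth in
/-- `Sys_st = S ∖ Env_st`. -/
theorem sysSt_eq_compl_envSt {Vx Vy S : Type} [Fintype Vx] [Fintype Vy]
    (δ : S → Set (Vx ⊕ Vy) → S) (Acc : Set S) (α : BForm Vx) :
    SysSt δ Acc α = (EnvSt δ Acc α)ᶜ := by
  show OrderHom.gfp (sysStOuter δ Acc α) = (OrderHom.lfp (envStOuter δ Acc α))ᶜ
  rw [sysStOuter_eq, gfp_complConj]
end

section
/- Let φ be an LTLf formula over X ∪ Y, ψ = t(φ) ∧ alive ∧ (alive U G¬alive) its translated LTL formula over X ∪ Y ∪ {alive} with alive a fresh atom assigned to the agent, and ψ_A an arbitrary LTL formula over X ∪ Y (the environment assumption). Then φ is realizable with respect to ⟨X, Y⟩ under assumption ψ_A if and only if the LTL formula ψ_A → ψ is realizable with respect to ⟨X, Y ∪ {alive}⟩. -/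
namespace LTLfSynth

section Helpers

open Formula

lemma infSatAt_map_iff {P Q : Type} (h : P → Q) (τ' : ℕ → Set Q) (τ : ℕ → Set P)
    (hh : ∀ i a, a ∈ τ i ↔ h a ∈ τ' i) (ψ : Formula P) :
    ∀ i : ℕ, Formula.infSatAt τ' (ψ.map h) i ↔ Formula.infSatAt τ ψ i := by
  induction ψ with
  | tt => intro i; simp [Formula.map, Formula.infSatAt]
  | atom a => intro i; simpa [Formula.map, Formula.infSatAt] using (hh i a).symm
  | not ψ ih => intro i; simp [Formula.map, Formula.infSatAt, ih i]
  | and φ ψ ih1 ih2 => intro i; simp [Formula.map, Formula.infSatAt, ih1 i, ih2 i]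
  | next ψ ih => intro i; simpa [Formula.map, Formula.infSatAt] using ih (i+1)
  | until_ φ ψ ih1 ih2 =>
      intro i
      simp only [Formula.map, Formula.infSatAt]
      constructor
      · rintro ⟨j, h1, h2, h3⟩
        exact ⟨j, h1, (ih2 j).mp h2, fun k hk1 hk2 => (ih1 k).mp (h3 k hk1 hk2)⟩
      · rintro ⟨j, h1, h2, h3⟩
        exact ⟨j, h1, (ih2 j).mpr h2, fun k hk1 hk2 => (ih1 k).mpr (h3 k hk1 hk2)⟩

lemma infSatAt_imp {P : Type} (τ : ℕ → Set P) (a b : Formula P) (i : ℕ) :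
    Formula.infSatAt τ (Formula.imp a b) i ↔
      (Formula.infSatAt τ a i → Formula.infSatAt τ b i) := by
  simp only [Formula.imp, Formula.or, Formula.infSatAt]
  tauto

lemma infSatAt_G_not_alive {P : Type} (τ' : ℕ → Set (Option P)) (j : ℕ) :
    Formula.infSatAt τ' (Formula.G (Formula.not (alive (P := P)))) j ↔
      ∀ j', j ≤ j' → none ∉ τ' j' := by
  simp only [Formula.G, Formula.F, Formula.infSatAt, alive, not_exists, not_and, not_not]
  constructor
  · intro h j' hj' hmem
    exact h j' hj' hmem fun k _ _ => trivial
  · intro h j' hj' hmem _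
    exact h j' hj' hmem

lemma trans_correct {P : Type} (τ' : ℕ → Set (Option P)) (ρ : List (Set P)) (n : ℕ)
    (hn : ρ.length = n)
    (halive : ∀ i, none ∈ τ' i ↔ i < n)
    (hatom : ∀ i < n, ∀ a : P, a ∈ ρ.getD i ∅ ↔ some a ∈ τ' i)
    (φ : Formula P) :
    ∀ i : ℕ, i < n → (Formula.infSatAt τ' (t φ) i ↔ Formula.finSatAt ρ φ i) := by
  induction φ with
  | tt => intro i hi; simp [t, Formula.infSatAt, Formula.finSatAt]
  | atom a => intro i hi; simpa [t, Formula.infSatAt, Formula.finSatAt] using (hatom i hi a).symm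
  | not ψ ih => intro i hi; simp [t, Formula.infSatAt, Formula.finSatAt, ih i hi]
  | and φ ψ ih1 ih2 =>
      intro i hi; simp [t, Formula.infSatAt, Formula.finSatAt, ih1 i hi, ih2 i hi]
  | next ψ ih =>
      intro i hi
      simp only [t, Formula.infSatAt, Formula.finSatAt, alive, hn]
      rw [halive (i+1)]
      constructor
      · rintro ⟨h1, h2⟩; exact ⟨h1, (ih _ h1).mp h2⟩
      · rintro ⟨h1, h2⟩; exact ⟨h1, (ih _ h1).mpr h2⟩
  | until_ φ ψ ih1 ih2 =>
      intro i hi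
      simp only [t, Formula.infSatAt, Formula.finSatAt, alive, hn]
      constructor
      · rintro ⟨j, hij, ⟨hjA, hjψ⟩, hk⟩
        have hjn := (halive j).mp hjA
        exact ⟨j, hij, hjn, (ih2 j hjn).mp hjψ,
          fun k h1 h2 => (ih1 k (h2.trans hjn)).mp (hk k h1 h2)⟩
      · rintro ⟨j, hij, hjn, hjψ, hk⟩
        exact ⟨j, hij, ⟨(halive j).mpr hjn, (ih2 j hjn).mpr hjψ⟩,
          fun k h1 h2 => (ih1 k (h2.trans hjn)).mpr (hk k h1 h2)⟩

lemma length_finPrefix {Vx Vy : Type} (g : List (Set Vx) → Set Vy) (lam : ℕ → Set Vx)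
    (k : ℕ) : (finPrefix g lam k).length = k + 1 := by
  simp [finPrefix]

lemma getD_finPrefix {Vx Vy : Type} (g : List (Set Vx) → Set Vy) (lam : ℕ → Set Vx)
    {k i : ℕ} (h : i < k + 1) :
    (finPrefix g lam k).getD i ∅ = inducedTrace g lam i := by
  simp [finPrefix, List.getD, List.getElem?_map, List.getElem?_range h]

lemma length_histList {A : Type} (lam : ℕ → A) (j : ℕ) : (histList lam j).length = j := by
  simp [histList]

lemma histList_getD {Vx : Type} (lam : ℕ → Set Vx) {i m : ℕ} (h : i < m) :
    (histList lam m).getD i ∅ = lam i := by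
  simp [histList, List.getD, List.getElem?_map, List.getElem?_range h]

lemma histList_take {Vx : Type} (lam : ℕ → Set Vx) {k m : ℕ} (h : k ≤ m) :
    (histList lam m).take k = histList lam k := by
  simp [histList, ← List.map_take, List.take_range,
    Nat.min_eq_left h]

lemma traceOf_histList {Vx Vy : Type} (g : List (Set Vx) → Set Vy) (lam : ℕ → Set Vx)
    {k m : ℕ} (h : k + 1 ≤ m) :
    (List.range (k+1)).map (fun i => combine ((histList lam m).getD i ∅)
        (g ((histList lam m).take (i+1)))) = finPrefix g lam k := by
  unfold finPrefix
  apply List.map_congr_left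
  intro i hi
  rw [List.mem_range] at hi
  rw [histList_getD lam (hi.trans_le h), histList_take lam (hi.trans_le h : i + 1 ≤ m)]
  rfl

end Helpers

end LTLfSynth

open LTLfSynth in
/-- For an arbitrary LTL assumption `ψ_A` over `X ∪ Y`: `φ` is
realizable w.r.t. `⟨X, Y⟩` under assumption `ψ_A` iff the LTL formula `ψ_A → ψ` is
realizable w.r.t. `⟨X, Y ∪ {alive}⟩`, where `ψ = t(φ) ∧ alive ∧ (alive U G ¬alive)`. -/
theorem realizable_under_iff_ltl_realizable {Vx Vy : Type} [Fintype Vx] [Fintype Vy]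
    (φ ψA : Formula (Vx ⊕ Vy)) :
    realizableUnder ψA φ ↔
      ltlRealizable (Vx := Vx) (Vy := Vy)
        (Formula.imp (ψA.map some) (transLTL φ)) := by
  classical
  constructor
  · rintro ⟨g, hg⟩
    refine ⟨fun l => {v | match v with
      | none => ∀ k, k + 1 < l.length →
          ¬ Formula.finSat ((List.range (k+1)).map
            (fun i => combine (l.getD i ∅) (g (l.take (i+1))))) φ
      | some y => y ∈ g l}, ?_⟩
    intro lam
    set f : List (Set Vx) → Set (Option Vy) := fun l => {v | match v with
      | none => ∀ k, k + 1 < l.length →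
          ¬ Formula.finSat ((List.range (k+1)).map
            (fun i => combine (l.getD i ∅) (g (l.take (i+1))))) φ
      | some y => y ∈ g l} with hfdef
    set τ' : ℕ → Set (Option (Vx ⊕ Vy)) :=
      fun i => combineA (lam i) (f (histList lam (i + 1))) with hτ'
    show Formula.infSatAt τ' _ 0
    rw [infSatAt_imp]
    intro hA
    have hmem : ∀ (i : ℕ) (v : Vx ⊕ Vy), v ∈ inducedTrace g lam i ↔ some v ∈ τ' i := by
      intro i v
      cases v with
      | inl x => simp [hτ', inducedTrace, combine, combineA, Set.mem_setOf_eq]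
      | inr y => simp [hτ', hfdef, inducedTrace, combine, combineA, Set.mem_setOf_eq]
    have halive_raw : ∀ i : ℕ, none ∈ τ' i ↔
        ∀ k < i, ¬ Formula.finSat (finPrefix g lam k) φ := by
      intro i
      have h1 : none ∈ τ' i ↔ none ∈ f (histList lam (i+1)) := by
        simp [hτ', combineA, Set.mem_setOf_eq]
      rw [h1, hfdef]
      simp only [Set.mem_setOf_eq, length_histList]
      constructor
      · intro h k hk
        rw [← traceOf_histList g lam (Nat.succ_le_succ hk.le)]
        exact h k (Nat.succ_lt_succ hk)
      · intro h k hk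
        rw [traceOf_histList g lam (Nat.succ_le_succ (Nat.lt_of_succ_lt_succ hk).le)]
        exact h k (Nat.lt_of_succ_lt_succ hk)
    have hψA : Formula.infSat (inducedTrace g lam) ψA :=
      (infSatAt_map_iff some τ' (inducedTrace g lam) hmem ψA 0).mp hA
    obtain ⟨k, hk⟩ := hg lam hψA
    have hex : ∃ k, Formula.finSat (finPrefix g lam k) φ := ⟨k, hk⟩
    set k₀ := Nat.find hex with hk₀
    have hspec : Formula.finSat (finPrefix g lam k₀) φ := Nat.find_spec hex
    have hmin : ∀ m < k₀, ¬ Formula.finSat (finPrefix g lam m) φ :=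
      fun m hm => Nat.find_min hex hm
    have halive : ∀ i : ℕ, none ∈ τ' i ↔ i < k₀ + 1 := by
      intro i
      rw [halive_raw i]
      constructor
      · intro h
        by_contra hi
        exact h k₀ (Nat.lt_of_succ_le (not_lt.mp hi)) hspec
      · intro hi m hm
        exact hmin m (hm.trans_le (Nat.lt_succ_iff.mp hi))
    have hatom : ∀ i < k₀ + 1, ∀ a : Vx ⊕ Vy,
        a ∈ (finPrefix g lam k₀).getD i ∅ ↔ some a ∈ τ' i := by
      intro i hi a
      rw [getD_finPrefix g lam hi]
      exact hmem i a
    have htrans := trans_correct τ' (finPrefix g lam k₀) (k₀ + 1)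
      (length_finPrefix g lam k₀) halive hatom φ 0 (Nat.succ_pos k₀)
    refine ⟨htrans.mpr hspec, (halive 0).mpr (Nat.succ_pos k₀), k₀ + 1, Nat.zero_le _, ?_, ?_⟩
    · rw [infSatAt_G_not_alive]
      intro j' hj' hmem'
      exact absurd ((halive j').mp hmem') (not_lt.mpr hj')
    · intro k _ hk'
      exact (halive k).mpr hk'
  · rintro ⟨f, hf⟩
    refine ⟨fun l => {y | some y ∈ f l}, ?_⟩
    intro lam hA
    set g : List (Set Vx) → Set Vy := fun l => {y | some y ∈ f l} with hgdef
    set τ' : ℕ → Set (Option (Vx ⊕ Vy)) :=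
      fun i => combineA (lam i) (f (histList lam (i + 1))) with hτ'
    have hmem : ∀ (i : ℕ) (v : Vx ⊕ Vy), v ∈ inducedTrace g lam i ↔ some v ∈ τ' i := by
      intro i v
      cases v with
      | inl x => simp [hτ', inducedTrace, combine, combineA, Set.mem_setOf_eq]
      | inr y => simp [hτ', hgdef, inducedTrace, combine, combineA, Set.mem_setOf_eq]
    have h1 : Formula.infSatAt τ' (Formula.imp (ψA.map some) (transLTL φ)) 0 := hf lam
    rw [infSatAt_imp] at h1
    have h2 := h1 ((infSatAt_map_iff some τ' (inducedTrace g lam) hmem ψA 0).mpr hA)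
    obtain ⟨hT, hA0, j, -, hG, hK⟩ := h2
    rw [infSatAt_G_not_alive] at hG
    have hj1 : 1 ≤ j := by
      rcases Nat.eq_zero_or_pos j with h | h
      · subst h; exact absurd hA0 (hG 0 le_rfl)
      · exact h
    have halive : ∀ i : ℕ, none ∈ τ' i ↔ i < j := by
      intro i
      constructor
      · intro h
        by_contra hi
        exact hG i (not_lt.mp hi) h
      · intro hi
        exact hK i (Nat.zero_le _) hi
    have hlen : (finPrefix g lam (j - 1)).length = j := by
      rw [length_finPrefix, Nat.sub_add_cancel hj1]
    have hatom : ∀ i < j, ∀ a : Vx ⊕ Vy,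
        a ∈ (finPrefix g lam (j - 1)).getD i ∅ ↔ some a ∈ τ' i := by
      intro i hi a
      rw [getD_finPrefix g lam (by omega : i < j - 1 + 1)]
      exact hmem i a
    exact ⟨j - 1, (trans_correct τ' (finPrefix g lam (j - 1)) j hlen halive hatom φ 0
      (Nat.lt_of_lt_of_le Nat.zero_lt_one hj1)).mp hT⟩
end
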